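/- Let M = ℕ₀ \ {1} (the additive monoid of nonnegative integers except 1) and let N = {(0,0)} ∪ (ℕ₀ × ℕ), an additive submonoid of ℤ². Then the direct product monoid M × N is atomic; its purely long atoms are exactly {(2, (0,0))} and its purely short atoms are exactly {(3, (0,0))} (so M × N is a PLS monoid); M × N is a finite factorization monoid; and M × N is not a length-factorial monoid, since the element (0, (2,2)) has the two distinct equal-length factorizations (0,(0,1)) + (0,(2,1)) and (0,(1,1)) + (0,(1,1)). -/
import Mathlib


section Defs

variable {M : Type*} [AddCommMonoid M]

/-- `a` is an atom (irreducible element) of the additive monoid `M`. -/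
def IsAddAtom (a : M) : Prop :=
  ¬IsAddUnit a ∧ ∀ x y : M, a = x + y → IsAddUnit x ∨ IsAddUnit y

/-- `a` divides `x` in the additive monoid `M`. -/
def AddDvd (a x : M) : Prop := ∃ c : M, x = a + c

/-- `a` is a prime element of the additive monoid `M`. -/
def IsAddPrime (a : M) : Prop :=
  ¬IsAddUnit a ∧ ∀ x y : M, AddDvd a (x + y) → AddDvd a x ∨ AddDvd a y

/-- `z` is a factorization of `x`: a multiset of atoms whose sum is `x`. -/
def IsFactorizationOf (z : Multiset M) (x : M) : Prop :=
  (∀ a ∈ z, IsAddAtom a) ∧ z.sum = x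

/-- `M` is atomic: every non-invertible element is a sum of atoms. -/
def IsAddAtomic (M : Type*) [AddCommMonoid M] : Prop :=
  ∀ x : M, ¬IsAddUnit x → ∃ z : Multiset M, IsFactorizationOf z x

/-- `M` is a finite factorization monoid: it is atomic and every element has only
finitely many factorizations. -/
def IsFFM (M : Type*) [AddCommMonoid M] : Prop :=
  IsAddAtomic M ∧ ∀ x : M, {z : Multiset M | IsFactorizationOf z x}.Finite

/-- `M` is a length-factorial monoid: it is atomic and any two factorizations of the
same element having the same length are equal. -/
def IsLFM (M : Type*) [AddCommMonoid M] : Prop :=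
  IsAddAtomic M ∧
    ∀ (x : M) (z₁ z₂ : Multiset M), IsFactorizationOf z₁ x → IsFactorizationOf z₂ x →
      Multiset.card z₁ = Multiset.card z₂ → z₁ = z₂

/-- A pair of factorizations is irredundant if no atom appears in both. -/
def Irredundant (z₁ z₂ : Multiset M) : Prop := ∀ a ∈ z₁, a ∉ z₂

/-- `a` is a purely long atom of `M`. -/
def IsPurelyLong (a : M) : Prop :=
  IsAddAtom a ∧ ¬IsAddPrime a ∧
    ∀ (x : M) (z₁ z₂ : Multiset M), IsFactorizationOf z₁ x → IsFactorizationOf z₂ x →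
      Irredundant z₁ z₂ → a ∈ z₁ → Multiset.card z₂ < Multiset.card z₁

/-- `a` is a purely short atom of `M`. -/
def IsPurelyShort (a : M) : Prop :=
  IsAddAtom a ∧ ¬IsAddPrime a ∧
    ∀ (x : M) (z₁ z₂ : Multiset M), IsFactorizationOf z₁ x → IsFactorizationOf z₂ x →
      Irredundant z₁ z₂ → a ∈ z₁ → Multiset.card z₁ < Multiset.card z₂

end Defs

/-- The additive monoid `M = ℕ₀ \ {1}`, as a submonoid of `ℕ`. -/
def Mnum : AddSubmonoid ℕ where
  carrier := {k : ℕ | k ≠ 1}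
  zero_mem' := by simp
  add_mem' := by
    intro a b ha hb
    simp only [Set.mem_setOf_eq] at *
    omega

/-- The additive monoid `N = {(0,0)} ∪ (ℕ₀ × ℕ)`, as a submonoid of `ℤ²`. -/
def Nsub : AddSubmonoid (ℤ × ℤ) where
  carrier := {p : ℤ × ℤ | p = 0 ∨ (0 ≤ p.1 ∧ 0 < p.2)}
  zero_mem' := Or.inl rfl
  add_mem' := by
    rintro p q (rfl | hp) hq
    · simpa using hq
    · rcases hq with rfl | hq
      · exact Or.inr (by simpa using hp)
      · exact Or.inr ⟨by simpa using add_nonneg hp.1 hq.1,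
          by simpa using add_pos hp.2 hq.2⟩

/-- The direct product monoid `M × N` of Example 3.2, and designated elements of it. -/
abbrev MN : Type := ↥Mnum × ↥Nsub

/-- The atom `(2, (0,0))` of `M × N`. -/
def aTwo : MN := (⟨2, show (2:ℕ) ≠ 1 by decide⟩, 0)

/-- The atom `(3, (0,0))` of `M × N`. -/
def aThree : MN := (⟨3, show (3:ℕ) ≠ 1 by decide⟩, 0)

/-- The atom `(0, (0,1))` of `M × N`. -/
def e01 : MN := (0, ⟨(0, 1), Or.inr ⟨le_refl 0, one_pos⟩⟩)

/-- The atom `(0, (1,1))` of `M × N`. -/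
def e11 : MN := (0, ⟨(1, 1), Or.inr ⟨by norm_num, one_pos⟩⟩)

/-- The atom `(0, (2,1))` of `M × N`. -/
def e21 : MN := (0, ⟨(2, 1), Or.inr ⟨by norm_num, one_pos⟩⟩)

/-- The element `(0, (2,2))` of `M × N`. -/
def x22 : MN := (0, ⟨(2, 2), Or.inr ⟨by norm_num, by norm_num⟩⟩)

namespace EXA

/-- projection to the `M`-coordinate. -/
def φm : MN →+ ℕ where
  toFun x := x.1.1
  map_zero' := rfl
  map_add' _ _ := rfl

/-- projection to the first `ℤ`-coordinate of `N`. -/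
def φa : MN →+ ℤ where
  toFun x := x.2.1.1
  map_zero' := rfl
  map_add' _ _ := rfl

/-- projection to the second `ℤ`-coordinate of `N`. -/
def φb : MN →+ ℤ where
  toFun x := x.2.1.2
  map_zero' := rfl
  map_add' _ _ := rfl

lemma MN_ext {x y : MN} (h1 : φm x = φm y) (h2 : φa x = φa y) (h3 : φb x = φb y) :
    x = y := by
  obtain ⟨⟨m, hm⟩, ⟨⟨a, b⟩, hp⟩⟩ := x
  obtain ⟨⟨m', hm'⟩, ⟨⟨a', b'⟩, hp'⟩⟩ := y
  simp only [φm, φa, φb, AddMonoidHom.coe_mk, ZeroHom.coe_mk] at h1 h2 h3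
  subst h1; subst h2; subst h3; rfl

lemma mem_cases (x : MN) : (x.2 : ℤ × ℤ) = 0 ∨ (0 ≤ φa x ∧ 0 < φb x) := x.2.2

lemma mnot1 (x : MN) : φm x ≠ 1 := x.1.2

lemma φa_nonneg (x : MN) : 0 ≤ φa x := by
  rcases mem_cases x with h | h
  · simp only [φa, AddMonoidHom.coe_mk, ZeroHom.coe_mk]
    rw [show x.2.1.1 = (x.2 : ℤ × ℤ).1 from rfl, h]
    exact le_refl 0
  · exact h.1

lemma φb_nonneg (x : MN) : 0 ≤ φb x := by
  rcases mem_cases x with h | h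
  · simp only [φb, AddMonoidHom.coe_mk, ZeroHom.coe_mk]
    rw [show x.2.1.2 = (x.2 : ℤ × ℤ).2 from rfl, h]
    exact le_refl 0
  · exact h.2.le

lemma eq_zero_mb {x : MN} (h1 : φm x = 0) (h2 : φb x = 0) : x = 0 := by
  rcases mem_cases x with h | h
  · refine MN_ext h1 ?_ h2
    show x.2.1.1 = 0
    rw [show x.2.1.1 = (x.2 : ℤ × ℤ).1 from rfl, h]
    rfl
  · exact absurd h2 (by intro hb; exact absurd hb (by rw [hb] at h; exact absurd rfl h.2.ne))

lemma unit_iff {x : MN} : IsAddUnit x ↔ x = 0 := by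
  constructor
  · intro h
    obtain ⟨y, hy⟩ := isAddUnit_iff_exists_neg.mp h
    have hm : φm x + φm y = 0 := by rw [← map_add, hy]; rfl
    have hb : φb x + φb y = 0 := by rw [← map_add, hy]; rfl
    exact eq_zero_mb (by omega) (by have := φb_nonneg x; have := φb_nonneg y; omega)
  · rintro rfl; exact isAddUnit_zero

/-- The atom `(0,(c,1))`. -/
def eAtom (c : ℕ) : MN := (0, ⟨((c : ℤ), 1), Or.inr ⟨by positivity, one_pos⟩⟩)

lemma e01_eq : e01 = eAtom 0 := rfl
lemma e11_eq : e11 = eAtom 1 := rfl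
lemma e21_eq : e21 = eAtom 2 := rfl

lemma φm_aTwo : φm aTwo = 2 := rfl
lemma φm_aThree : φm aThree = 3 := rfl
lemma φa_aTwo : φa aTwo = 0 := rfl
lemma φa_aThree : φa aThree = 0 := rfl
lemma φb_aTwo : φb aTwo = 0 := rfl
lemma φb_aThree : φb aThree = 0 := rfl
lemma φm_eAtom (c : ℕ) : φm (eAtom c) = 0 := rfl
lemma φa_eAtom (c : ℕ) : φa (eAtom c) = c := rfl
lemma φb_eAtom (c : ℕ) : φb (eAtom c) = 1 := rfl

lemma aTwo_ne_aThree : aTwo ≠ aThree := by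
  intro h; have := congrArg φm h; simp [φm_aTwo, φm_aThree] at this

lemma eAtom_ne_aTwo (c : ℕ) : eAtom c ≠ aTwo := by
  intro h; have := congrArg φb h; simp [φb_aTwo, φb_eAtom] at this

lemma eAtom_ne_aThree (c : ℕ) : eAtom c ≠ aThree := by
  intro h; have := congrArg φb h; simp [φb_aThree, φb_eAtom] at this

lemma eAtom_inj {c d : ℕ} (h : eAtom c = eAtom d) : c = d := by
  have := congrArg φa h; simp [φa_eAtom] at this; exact_mod_cast this

lemma isAddAtom_aTwo : IsAddAtom aTwo := by
  constructor
  · rw [unit_iff]; intro h; have := congrArg φm h; simp [φm_aTwo] at this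
  · intro x y hxy
    have hm : φm x + φm y = 2 := by rw [← map_add, ← hxy]; rfl
    have hb : φb x + φb y = 0 := by rw [← map_add, ← hxy]; rfl
    have hbx := φb_nonneg x; have hby := φb_nonneg y
    have h1 := mnot1 x; have h2 := mnot1 y
    rcases show φm x = 0 ∨ φm y = 0 by omega with h | h
    · exact Or.inl (unit_iff.mpr (eq_zero_mb h (by omega)))
    · exact Or.inr (unit_iff.mpr (eq_zero_mb h (by omega)))

lemma isAddAtom_aThree : IsAddAtom aThree := by
  constructor
  · rw [unit_iff]; intro h; have := congrArg φm h; simp [φm_aThree] at this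
  · intro x y hxy
    have hm : φm x + φm y = 3 := by rw [← map_add, ← hxy]; rfl
    have hb : φb x + φb y = 0 := by rw [← map_add, ← hxy]; rfl
    have hbx := φb_nonneg x; have hby := φb_nonneg y
    have h1 := mnot1 x; have h2 := mnot1 y
    rcases show φm x = 0 ∨ φm y = 0 by omega with h | h
    · exact Or.inl (unit_iff.mpr (eq_zero_mb h (by omega)))
    · exact Or.inr (unit_iff.mpr (eq_zero_mb h (by omega)))

lemma isAddAtom_eAtom (c : ℕ) : IsAddAtom (eAtom c) := by
  constructor
  · rw [unit_iff]; intro h; have := congrArg φb h; simp [φb_eAtom] at this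
  · intro x y hxy
    have hm : φm x + φm y = 0 := by rw [← map_add, ← hxy]; rfl
    have hb : φb x + φb y = 1 := by rw [← map_add, ← hxy, φb_eAtom]
    have hbx := φb_nonneg x; have hby := φb_nonneg y
    rcases show φb x = 0 ∨ φb y = 0 by omega with h | h
    · exact Or.inl (unit_iff.mpr (eq_zero_mb (by omega) h))
    · exact Or.inr (unit_iff.mpr (eq_zero_mb (by omega) h))

lemma atom_iff {x : MN} :
    IsAddAtom x ↔ x = aTwo ∨ x = aThree ∨ ∃ c : ℕ, x = eAtom c := by
  constructor
  · rintro ⟨hu, hsplit⟩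
    rw [unit_iff] at hu
    have hbx := φb_nonneg x
    have hax := φa_nonneg x
    have hm1 := mnot1 x
    -- first: x.1 = 0 or x.2 = 0
    have key : φm x = 0 ∨ φb x = 0 := by
      by_contra hc
      push_neg at hc
      obtain ⟨hm0, hb0⟩ := hc
      have hsp := hsplit (x.1, 0) (0, x.2) (by
        refine MN_ext ?_ ?_ ?_ <;> simp [φm, φa, φb])
      rcases hsp with h | h
      · rw [unit_iff] at h
        exact hm0 (by have := congrArg φm h; simpa [φm] using this)
      · rw [unit_iff] at h
        exact hb0 (by have := congrArg φb h; simpa [φb] using this)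
    rcases key with hm0 | hb0
    · -- x = (0, (a,b)) with b ≥ 1
      right; right
      have hb1 : 0 < φb x := by
        rcases (lt_or_eq_of_le hbx) with h | h
        · exact h
        · exact absurd (eq_zero_mb hm0 h.symm) hu
      have hb : φb x = 1 := by
        by_contra hbne
        have hb2 : 2 ≤ φb x := by omega
        have hsp := hsplit (0, ⟨(φa x, 1), Or.inr ⟨hax, one_pos⟩⟩)
          (0, ⟨(0, φb x - 1), Or.inr ⟨le_refl 0, by omega⟩⟩) (by
            refine MN_ext ?_ ?_ ?_
            · show φm x = 0 + 0; omega
            · show φa x = φa x + 0; omega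
            · show φb x = 1 + (φb x - 1); omega)
        rcases hsp with h | h <;> rw [unit_iff] at h
        · exact absurd (show (1:ℤ) = 0 from congrArg φb h) (by decide)
        · have h2' : φb x - 1 = 0 := congrArg φb h
          omega
      refine ⟨(φa x).toNat, MN_ext (by simpa [φm_eAtom] using hm0) ?_ ?_⟩
      · rw [φa_eAtom]; omega
      · rw [φb_eAtom]; omega
    · -- x = (m, 0) with m ∈ {2,3}
      have hm0 : φm x ≠ 0 := fun h => hu (eq_zero_mb h hb0)
      have hm4 : φm x < 4 := by
        by_contra hge
        push_neg at hge
        have ha0' : φa x = 0 := by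
          rcases mem_cases x with h | h
          · show x.2.1.1 = 0
            rw [show x.2.1.1 = (x.2 : ℤ × ℤ).1 from rfl, h]; rfl
          · omega
        have hsp := hsplit (⟨2, show (2:ℕ) ≠ 1 by decide⟩, 0)
          (⟨φm x - 2, show φm x - 2 ≠ 1 by omega⟩, 0) (by
          refine MN_ext ?_ ?_ ?_
          · show φm x = 2 + (φm x - 2); omega
          · show φa x = 0 + 0; omega
          · show φb x = 0 + 0; omega)
        rcases hsp with h | h <;> rw [unit_iff] at h
        · exact absurd (show (2:ℕ) = 0 from congrArg φm h) (by decide)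
        · have h2' : φm x - 2 = 0 := congrArg φm h
          omega
      have ha0 : φa x = 0 := by
        rcases mem_cases x with h | h
        · show x.2.1.1 = 0
          rw [show x.2.1.1 = (x.2 : ℤ × ℤ).1 from rfl, h]; rfl
        · omega
      rcases show φm x = 2 ∨ φm x = 3 by omega with h | h
      · exact Or.inl (MN_ext (by rw [h, φm_aTwo]) (by rw [ha0, φa_aTwo]) (by rw [hb0, φb_aTwo]))
      · exact Or.inr (Or.inl (MN_ext (by rw [h, φm_aThree]) (by rw [ha0, φa_aThree]) (by rw [hb0, φb_aThree])))
  · rintro (rfl | rfl | ⟨c, rfl⟩)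
    · exact isAddAtom_aTwo
    · exact isAddAtom_aThree
    · exact isAddAtom_eAtom c

lemma counts : ∀ {z : Multiset MN}, (∀ u ∈ z, IsAddAtom u) →
    2 * z.count aTwo + 3 * z.count aThree = φm z.sum ∧
    (z.count aTwo : ℤ) + z.count aThree + φb z.sum = Multiset.card z := by
  intro z
  induction z using Multiset.induction_on with
  | empty => intro _; simp
  | cons a t ih =>
    intro hz
    obtain ⟨h1, h2⟩ := ih (fun u hu => hz u (Multiset.mem_cons_of_mem hu))
    have ha := hz a (Multiset.mem_cons_self a t)
    rw [atom_iff] at ha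
    rcases ha with rfl | rfl | ⟨c, rfl⟩
    · constructor
      · rw [Multiset.count_cons_self, Multiset.count_cons_of_ne aTwo_ne_aThree.symm,
          Multiset.sum_cons, map_add, φm_aTwo]
        omega
      · rw [Multiset.count_cons_self, Multiset.count_cons_of_ne aTwo_ne_aThree.symm,
          Multiset.sum_cons, map_add, φb_aTwo, Multiset.card_cons]
        push_cast
        omega
    · constructor
      · rw [Multiset.count_cons_self, Multiset.count_cons_of_ne aTwo_ne_aThree,
          Multiset.sum_cons, map_add, φm_aThree]
        omega
      · rw [Multiset.count_cons_self, Multiset.count_cons_of_ne aTwo_ne_aThree,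
          Multiset.sum_cons, map_add, φb_aThree, Multiset.card_cons]
        push_cast
        omega
    · constructor
      · rw [Multiset.count_cons_of_ne (eAtom_ne_aTwo c).symm,
          Multiset.count_cons_of_ne (eAtom_ne_aThree c).symm,
          Multiset.sum_cons, map_add, φm_eAtom]
        omega
      · rw [Multiset.count_cons_of_ne (eAtom_ne_aTwo c).symm,
          Multiset.count_cons_of_ne (eAtom_ne_aThree c).symm,
          Multiset.sum_cons, map_add, φb_eAtom, Multiset.card_cons]
        push_cast
        omega

lemma not_prime_aTwo : ¬IsAddPrime aTwo := by
  rintro ⟨-, h⟩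
  have h6 : AddDvd aTwo (aThree + aThree) := ⟨(⟨4, show (4:ℕ) ≠ 1 by decide⟩, 0), by
    refine MN_ext ?_ ?_ ?_
    · show (3 + 3 : ℕ) = 2 + 4; rfl
    · show (0 + 0 : ℤ) = 0 + 0; rfl
    · show (0 + 0 : ℤ) = 0 + 0; rfl⟩
  rcases h _ _ h6 with ⟨c, hc⟩ | ⟨c, hc⟩ <;>
  · have h3 : (3 : ℕ) = 2 + φm c := congrArg φm hc
    have := mnot1 c
    omega

lemma not_prime_aThree : ¬IsAddPrime aThree := by
  rintro ⟨-, h⟩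
  have h6 : AddDvd aThree (aTwo + (⟨4, show (4:ℕ) ≠ 1 by decide⟩, 0)) :=
    ⟨aThree, by
      refine MN_ext ?_ ?_ ?_
      · show (2 + 4 : ℕ) = 3 + 3; rfl
      · show (0 + 0 : ℤ) = 0 + 0; rfl
      · show (0 + 0 : ℤ) = 0 + 0; rfl⟩
  rcases h _ _ h6 with ⟨c, hc⟩ | ⟨c, hc⟩
  · have h3 : (2 : ℕ) = 3 + φm c := congrArg φm hc
    omega
  · have h3 : (4 : ℕ) = 3 + φm c := congrArg φm hc
    have := mnot1 c
    omega

lemma purelyLong_aTwo : IsPurelyLong aTwo := by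
  refine ⟨isAddAtom_aTwo, not_prime_aTwo, ?_⟩
  rintro x z₁ z₂ ⟨ha1, hs1⟩ ⟨ha2, hs2⟩ hirr hmem
  obtain ⟨e1m, e1c⟩ := counts ha1
  obtain ⟨e2m, e2c⟩ := counts ha2
  rw [hs1] at e1m e1c
  rw [hs2] at e2m e2c
  have h2 : z₂.count aTwo = 0 := Multiset.count_eq_zero.mpr (hirr aTwo hmem)
  have h1 : 0 < z₁.count aTwo := Multiset.count_pos.mpr hmem
  have h3 : z₁.count aThree = 0 ∨ z₂.count aThree = 0 := by
    by_contra hc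
    push_neg at hc
    exact hirr aThree (Multiset.count_pos.mp (Nat.pos_of_ne_zero hc.1))
      (Multiset.count_pos.mp (Nat.pos_of_ne_zero hc.2))
  rcases h3 with h3 | h3 <;> omega

lemma purelyShort_aThree : IsPurelyShort aThree := by
  refine ⟨isAddAtom_aThree, not_prime_aThree, ?_⟩
  rintro x z₁ z₂ ⟨ha1, hs1⟩ ⟨ha2, hs2⟩ hirr hmem
  obtain ⟨e1m, e1c⟩ := counts ha1
  obtain ⟨e2m, e2c⟩ := counts ha2
  rw [hs1] at e1m e1c
  rw [hs2] at e2m e2c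
  have h2 : z₂.count aThree = 0 := Multiset.count_eq_zero.mpr (hirr aThree hmem)
  have h1 : 0 < z₁.count aThree := Multiset.count_pos.mpr hmem
  have h3 : z₁.count aTwo = 0 ∨ z₂.count aTwo = 0 := by
    by_contra hc
    push_neg at hc
    exact hirr aTwo (Multiset.count_pos.mp (Nat.pos_of_ne_zero hc.1))
      (Multiset.count_pos.mp (Nat.pos_of_ne_zero hc.2))
  rcases h3 with h3 | h3 <;> omega

lemma fact_pair_33 : IsFactorizationOf ({aThree, aThree} : Multiset MN)
    (aThree + aThree) := by
  constructor
  · intro u hu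
    rcases Multiset.mem_cons.mp hu with rfl | hu
    · exact isAddAtom_aThree
    · rw [Multiset.mem_singleton.mp hu]; exact isAddAtom_aThree
  · show aThree + (aThree + 0) = aThree + aThree
    rw [add_zero]

lemma fact_triple_2 : IsFactorizationOf ({aTwo, aTwo, aTwo} : Multiset MN)
    (aThree + aThree) := by
  constructor
  · intro u hu
    simp only [Multiset.insert_eq_cons, Multiset.mem_cons, Multiset.mem_singleton] at hu
    rcases hu with rfl | rfl | rfl <;> exact isAddAtom_aTwo
  · show aTwo + (aTwo + (aTwo + 0)) = aThree + aThree
    refine MN_ext ?_ ?_ ?_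
    · show (2 + (2 + (2 + 0)) : ℕ) = 3 + 3; rfl
    · show (0 + (0 + (0 + 0)) : ℤ) = 0 + 0; rfl
    · show (0 + (0 + (0 + 0)) : ℤ) = 0 + 0; rfl

lemma fact_e_pair (c : ℕ) : IsFactorizationOf ({eAtom c, eAtom (c + 2)} : Multiset MN)
    (({eAtom c, eAtom (c + 2)} : Multiset MN).sum) := by
  constructor
  · intro u hu
    simp only [Multiset.insert_eq_cons, Multiset.mem_cons, Multiset.mem_singleton] at hu
    rcases hu with rfl | rfl <;> exact isAddAtom_eAtom _
  · rfl

lemma fact_e_pair' (c : ℕ) : IsFactorizationOf ({eAtom (c + 1), eAtom (c + 1)} : Multiset MN)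
    (({eAtom c, eAtom (c + 2)} : Multiset MN).sum) := by
  constructor
  · intro u hu
    simp only [Multiset.insert_eq_cons, Multiset.mem_cons, Multiset.mem_singleton] at hu
    rcases hu with rfl | rfl <;> exact isAddAtom_eAtom _
  · show eAtom (c + 1) + (eAtom (c + 1) + 0) = eAtom c + (eAtom (c + 2) + 0)
    refine MN_ext ?_ ?_ ?_
    · rfl
    · show ((c : ℤ) + 1 + (((c : ℤ) + 1) + 0)) = (c : ℤ) + (((c : ℤ) + 2) + 0)
      ring
    · rfl

lemma irr_e (c : ℕ) : Irredundant ({eAtom c, eAtom (c + 2)} : Multiset MN)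
    ({eAtom (c + 1), eAtom (c + 1)} : Multiset MN) := by
  intro u hu hv
  simp only [Multiset.insert_eq_cons, Multiset.mem_cons, Multiset.mem_singleton] at hu hv
  rcases hu with rfl | rfl <;> rcases hv with hv | hv <;>
    (have := eAtom_inj hv; omega)

lemma purelyLong_iff (a : MN) : IsPurelyLong a ↔ a = aTwo := by
  constructor
  · rintro ⟨hatom, -, hlong⟩
    rw [atom_iff] at hatom
    rcases hatom with rfl | rfl | ⟨c, rfl⟩
    · rfl
    · have := hlong _ _ _ fact_pair_33 fact_triple_2
        (by
          intro u hu hv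
          simp only [Multiset.insert_eq_cons, Multiset.mem_cons, Multiset.mem_singleton] at hu hv
          rcases hu with rfl | rfl <;> rcases hv with hv | hv | hv <;>
            exact aTwo_ne_aThree hv.symm)
        (Multiset.mem_cons_self _ _)
      simp at this
    · have := hlong _ _ _ (fact_e_pair c) (fact_e_pair' c) (irr_e c)
        (Multiset.mem_cons_self _ _)
      simp at this
  · rintro rfl; exact purelyLong_aTwo

lemma purelyShort_iff (a : MN) : IsPurelyShort a ↔ a = aThree := by
  constructor
  · rintro ⟨hatom, -, hshort⟩
    rw [atom_iff] at hatom
    rcases hatom with rfl | rfl | ⟨c, rfl⟩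
    · have := hshort _ _ _ fact_triple_2 fact_pair_33
        (by
          intro u hu hv
          simp only [Multiset.insert_eq_cons, Multiset.mem_cons, Multiset.mem_singleton] at hu hv
          rcases hu with rfl | rfl | rfl <;> rcases hv with hv | hv <;>
            exact aTwo_ne_aThree hv)
        (Multiset.mem_cons_self _ _)
      simp at this
    · rfl
    · have := hshort _ _ _ (fact_e_pair c) (fact_e_pair' c) (irr_e c)
        (Multiset.mem_cons_self _ _)
      simp at this
  · rintro rfl; exact purelyShort_aThree

lemma φ_sum_replicate {γ : Type*} [AddCommMonoid γ] (φ : MN →+ γ) (n : ℕ) (u : MN) :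
    φ (Multiset.replicate n u).sum = n • φ u := by
  rw [Multiset.sum_replicate, map_nsmul]

lemma atomic : IsAddAtomic MN := by
  intro x hx
  rw [unit_iff] at hx
  have hm1 := mnot1 x
  have hax := φa_nonneg x
  have hbx := φb_nonneg x
  obtain ⟨s, t, hst⟩ : ∃ s t : ℕ, 2 * s + 3 * t = φm x := by
    rcases Nat.even_or_odd (φm x) with ⟨k, hk⟩ | ⟨k, hk⟩
    · exact ⟨k, 0, by omega⟩
    · exact ⟨k - 1, 1, by omega⟩
  by_cases hb : φb x = 0
  · have ha0 : φa x = 0 := by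
      rcases mem_cases x with hh | hh
      · show x.2.1.1 = 0
        rw [show x.2.1.1 = (x.2 : ℤ × ℤ).1 from rfl, hh]; rfl
      · omega
    refine ⟨Multiset.replicate s aTwo + Multiset.replicate t aThree, ?_, ?_⟩
    · intro u hu
      rcases Multiset.mem_add.mp hu with hu | hu
    <;> rw [Multiset.eq_of_mem_replicate hu]
      · exact isAddAtom_aTwo
      · exact isAddAtom_aThree
    · refine (MN_ext ?_ ?_ ?_).symm <;>
        rw [Multiset.sum_add, map_add, φ_sum_replicate, φ_sum_replicate]
      · rw [φm_aTwo, φm_aThree, smul_eq_mul, smul_eq_mul]; omega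
      · rw [φa_aTwo, φa_aThree, ha0, smul_zero, smul_zero, add_zero]
      · rw [φb_aTwo, φb_aThree, hb, smul_zero, smul_zero, add_zero]
  · have hb1 : 0 < φb x := lt_of_le_of_ne hbx (Ne.symm hb)
    refine ⟨Multiset.replicate s aTwo + Multiset.replicate t aThree +
      (eAtom (φa x).toNat ::ₘ Multiset.replicate ((φb x).toNat - 1) (eAtom 0)), ?_, ?_⟩
    · intro u hu
      rcases Multiset.mem_add.mp hu with hu | hu
      · rcases Multiset.mem_add.mp hu with hu | hu <;> rw [Multiset.eq_of_mem_replicate hu]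
        · exact isAddAtom_aTwo
        · exact isAddAtom_aThree
      · rcases Multiset.mem_cons.mp hu with rfl | hu
        · exact isAddAtom_eAtom _
        · rw [Multiset.eq_of_mem_replicate hu]; exact isAddAtom_eAtom 0
    · refine (MN_ext ?_ ?_ ?_).symm <;>
        rw [Multiset.sum_add, Multiset.sum_add, Multiset.sum_cons, map_add, map_add, map_add,
          φ_sum_replicate, φ_sum_replicate, φ_sum_replicate]
      · rw [φm_aTwo, φm_aThree, φm_eAtom, φm_eAtom, smul_eq_mul, smul_eq_mul]
        simp only [smul_zero, add_zero, zero_add]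
        omega
      · rw [φa_aTwo, φa_aThree, φa_eAtom, φa_eAtom]
        simp only [smul_zero, add_zero, zero_add, Nat.cast_zero]
        omega
      · rw [φb_aTwo, φb_aThree, φb_eAtom, φb_eAtom]
        simp only [smul_zero, zero_add, smul_eq_mul, mul_one, nsmul_eq_mul]
        omega

lemma ffm_finite (x : MN) : {z : Multiset MN | IsFactorizationOf z x}.Finite := by
  classical
  set A : ℕ := (φa x).toNat with hA
  set n : ℕ := φm x + (φb x).toNat with hn
  set S : Finset MN := insert aTwo (insert aThree ((Finset.range (A + 1)).image eAtom))
    with hS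
  have key : ∀ z : Multiset MN, IsFactorizationOf z x → z ≤ n • S.val := by
    rintro z ⟨hz, hsum⟩
    rw [Multiset.le_iff_count]
    intro u
    rcases Nat.eq_zero_or_pos (z.count u) with h0 | hpos
    · rw [h0]; exact Nat.zero_le _
    have hu : u ∈ z := Multiset.count_pos.mp hpos
    have hcard : Multiset.card z ≤ n := by
      obtain ⟨e1, e2⟩ := counts hz
      rw [hsum] at e1 e2
      have := φb_nonneg x
      omega
    have huS : u ∈ S := by
      have hua := hz u hu
      rw [atom_iff] at hua
      rcases hua with rfl | rfl | ⟨c, rfl⟩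
      · exact Finset.mem_insert_self _ _
      · exact Finset.mem_insert_of_mem (Finset.mem_insert_self _ _)
      · refine Finset.mem_insert_of_mem (Finset.mem_insert_of_mem ?_)
        refine Finset.mem_image.mpr ⟨c, Finset.mem_range.mpr ?_, rfl⟩
        obtain ⟨t, rfl⟩ := Multiset.exists_cons_of_mem hu
        have h1 : φa ((eAtom c ::ₘ t).sum) = φa x := by rw [hsum]
        rw [Multiset.sum_cons, map_add, φa_eAtom] at h1
        have h2 := φa_nonneg t.sum
        have h3 := φa_nonneg x
        omega
    have hcount1 : 1 ≤ S.val.count u := Multiset.count_pos.mpr huS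
    calc z.count u ≤ Multiset.card z := Multiset.count_le_card _ _
      _ ≤ n := hcard
      _ ≤ n * S.val.count u := Nat.le_mul_of_pos_right _ hcount1
      _ = (n • S.val).count u := (Multiset.count_nsmul u n S.val).symm
  refine Set.Finite.subset ((n • S.val).powerset.toFinset.finite_toSet) ?_
  intro z hz
  simp only [Finset.coe_sort_coe, Finset.mem_coe, Multiset.mem_toFinset,
    Multiset.mem_powerset]
  exact key z hz

end EXA

/-- For `M = ℕ₀ \ {1}` and `N = {(0,0)} ∪ (ℕ₀ × ℕ) ⊆ ℤ²`, the monoid `M × N` is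
atomic; its purely long atoms are exactly `{(2,(0,0))}` and its purely short atoms
are exactly `{(3,(0,0))}` (so `M × N` is a PLS monoid); `M × N` is a finite
factorization monoid; and `M × N` is not length-factorial, since `(0,(2,2))` has the
two distinct equal-length factorizations `(0,(0,1)) + (0,(2,1))` and
`(0,(1,1)) + (0,(1,1))`. -/
theorem example_ffm_plsm_not_lfm :
    IsAddAtomic MN ∧
    (∀ a : MN, IsPurelyLong a ↔ a = aTwo) ∧
    (∀ a : MN, IsPurelyShort a ↔ a = aThree) ∧
    IsFFM MN ∧
    IsFactorizationOf ({e01, e21} : Multiset MN) x22 ∧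
    IsFactorizationOf ({e11, e11} : Multiset MN) x22 ∧
    ({e01, e21} : Multiset MN) ≠ {e11, e11} ∧
    Multiset.card ({e01, e21} : Multiset MN) = Multiset.card ({e11, e11} : Multiset MN) ∧
    ¬IsLFM MN := by
  have hf1 : IsFactorizationOf ({e01, e21} : Multiset MN) x22 := by
    constructor
    · intro u hu
      simp only [Multiset.insert_eq_cons, Multiset.mem_cons, Multiset.mem_singleton] at hu
      rcases hu with rfl | rfl
      · rw [EXA.e01_eq]; exact EXA.isAddAtom_eAtom 0
      · rw [EXA.e21_eq]; exact EXA.isAddAtom_eAtom 2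
    · show e01 + (e21 + 0) = x22
      refine EXA.MN_ext ?_ ?_ ?_ <;> decide
  have hf2 : IsFactorizationOf ({e11, e11} : Multiset MN) x22 := by
    constructor
    · intro u hu
      simp only [Multiset.insert_eq_cons, Multiset.mem_cons, Multiset.mem_singleton] at hu
      rcases hu with rfl | rfl <;> (rw [EXA.e11_eq]; exact EXA.isAddAtom_eAtom 1)
    · show e11 + (e11 + 0) = x22
      refine EXA.MN_ext ?_ ?_ ?_ <;> decide
  have hne : ({e01, e21} : Multiset MN) ≠ {e11, e11} := by
    intro hEq
    have h1 : e01 ∈ ({e11, e11} : Multiset MN) := hEq ▸ Multiset.mem_cons_self _ _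
    simp only [Multiset.insert_eq_cons, Multiset.mem_cons, Multiset.mem_singleton] at h1
    have h2 : e01 = e11 := by rcases h1 with h | h <;> exact h
    exact absurd (congrArg EXA.φa h2) (by decide)
  refine ⟨EXA.atomic, EXA.purelyLong_iff, EXA.purelyShort_iff,
    ⟨EXA.atomic, EXA.ffm_finite⟩, hf1, hf2, hne, rfl, ?_⟩
  rintro ⟨-, h⟩
  exact hne (h x22 _ _ hf1 hf2 rfl)
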